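/- The derived subgroup K′ = [K,K] contains Xⁿ*[K,G] for all n ≥ 5. -/

import Mathlib

open Equiv

/-! ## The binary rooted tree and the twisted twin of the Grigorchuk group

We identify the vertex set of the infinite rooted binary tree with `V = List Bool`
(the free monoid `X*` on `X = {0,1}`), and realize automorphisms of the tree as
permutations of `V`.  The generators `a, b, c, d` of the twisted twin `G` of the
Grigorchuk group are defined by the recursive rules
`a(xw) = (¬x)w`, `ψ(b) = (c,a)`, `ψ(c) = (a,d)`, `ψ(d) = (1,b)`. -/

abbrev V : Type := List Bool

def actA : V → V
  | [] => []
  | x :: w => (!x) :: w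

theorem actA_invol : Function.Involutive actA := fun w => by
  cases w with
  | nil => rfl
  | cons x w => simp [actA]

mutual
  def actB : V → V
    | [] => []
    | false :: w => false :: actC w
    | true :: w => true :: actA w
  def actC : V → V
    | [] => []
    | false :: w => false :: actA w
    | true :: w => true :: actD w
  def actD : V → V
    | [] => []
    | false :: w => false :: w
    | true :: w => true :: actB w
end

theorem act_invol3 (w : V) :
    actB (actB w) = w ∧ actC (actC w) = w ∧ actD (actD w) = w := by
  induction w with
  | nil => exact ⟨rfl, rfl, rfl⟩
  | cons x w ih =>
    cases x <;>
      exact ⟨by simp [actB, actC, actD, ih.1, ih.2.1, ih.2.2, actA_invol w],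
        by simp [actB, actC, actD, ih.1, ih.2.1, ih.2.2, actA_invol w],
        by simp [actB, actC, actD, ih.1, ih.2.1, ih.2.2, actA_invol w]⟩

theorem actB_invol : Function.Involutive actB := fun w => (act_invol3 w).1
theorem actC_invol : Function.Involutive actC := fun w => (act_invol3 w).2.1
theorem actD_invol : Function.Involutive actD := fun w => (act_invol3 w).2.2

/-- The generator `a`: the root swap. -/
def a : Perm V := actA_invol.toPerm actA
/-- The generator `b`, with `ψ(b) = (c, a)`. -/
def b : Perm V := actB_invol.toPerm actB
/-- The generator `c`, with `ψ(c) = (a, d)`. -/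
def c : Perm V := actC_invol.toPerm actC
/-- The generator `d`, with `ψ(d) = (1, b)`. -/
def d : Perm V := actD_invol.toPerm actD

@[simp] theorem coe_a : ⇑a = actA := rfl
@[simp] theorem coe_b : ⇑b = actB := rfl
@[simp] theorem coe_c : ⇑c = actC := rfl
@[simp] theorem coe_d : ⇑d = actD := rfl

/-- The twisted twin of the Grigorchuk group. -/
def G : Subgroup (Perm V) := Subgroup.closure {a, b, c, d}

theorem a_mem_G : a ∈ G := Subgroup.subset_closure (by simp)
theorem b_mem_G : b ∈ G := Subgroup.subset_closure (by simp)
theorem c_mem_G : c ∈ G := Subgroup.subset_closure (by simp)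
theorem d_mem_G : d ∈ G := Subgroup.subset_closure (by simp)

/-- `hasState g v s` says that the state (section) of `g` at the vertex `v` is `s`,
i.e. `g (v ++ w) = g v ++ s w` for all `w`. -/
def hasState (g : Perm V) (v : V) (s : Perm V) : Prop :=
  ∀ w : V, g (v ++ w) = g v ++ s w

def vstarFun (v : V) (f : V → V) : V → V :=
  fun w => if v <+: w then v ++ f (w.drop v.length) else w

theorem vstarFun_comp (v : V) (f f' : V → V) (w : V) :
    vstarFun v f (vstarFun v f' w) = vstarFun v (f ∘ f') w := by
  by_cases h : v <+: w
  · obtain ⟨t, rfl⟩ := h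
    simp [vstarFun, List.prefix_append, List.drop_left]
  · simp [vstarFun, h]

theorem vstarFun_id (v w : V) : vstarFun v id w = w := by
  by_cases h : v <+: w
  · obtain ⟨t, rfl⟩ := h
    simp [vstarFun, List.prefix_append, List.drop_left]
  · simp [vstarFun, h]

/-- `vstar v g` is the automorphism `v * g`, acting as `g` on the subtree rooted
at `v` and trivially elsewhere. -/
def vstar (v : V) (g : Perm V) : Perm V where
  toFun := vstarFun v g
  invFun := vstarFun v g.symm
  left_inv := fun w => by
    rw [vstarFun_comp, Equiv.symm_comp_self]
    exact vstarFun_id v w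
  right_inv := fun w => by
    rw [vstarFun_comp, Equiv.self_comp_symm]
    exact vstarFun_id v w

/-- `XstarSub n H` is the subgroup `Xⁿ * H`: the product of the copies `v * H`
over all vertices `v` of level `n` (equivalently, the subgroup they generate). -/
def XstarSub (n : ℕ) (H : Subgroup (Perm V)) : Subgroup (Perm V) :=
  Subgroup.closure {p | ∃ v : V, ∃ g : Perm V, v.length = n ∧ g ∈ H ∧ p = vstar v g}

/-- `pairPerm s₀ s₁ = ψ⁻¹(s₀, s₁)`: the first-level stabilizer element whose states
at the vertices `0` and `1` are `s₀` and `s₁`. -/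
def pairPerm (s₀ s₁ : Perm V) : Perm V := vstar [false] s₀ * vstar [true] s₁

/-- The permutations fixing every vertex of level `n`. -/
def stabLevel (n : ℕ) : Subgroup (Perm V) where
  carrier := {g : Perm V | ∀ v : V, v.length = n → g v = v}
  one_mem' := fun _ _ => rfl
  mul_mem' := by
    intro g h hg hh v hv
    show g (h v) = v
    rw [hh v hv, hg v hv]
  inv_mem' := by
    intro g hg v hv
    show g⁻¹ v = v
    conv_lhs => rw [← hg v hv]
    exact Equiv.symm_apply_apply g v

/-- The `n`-th level stabilizer `Stab_G(n)` of `G`. -/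
def stabG (n : ℕ) : Subgroup (Perm V) := G ⊓ stabLevel n

/-- The commutator `[x, y] = x⁻¹ y⁻¹ x y` (paper convention). -/
def pc (x y : Perm V) : Perm V := x⁻¹ * y⁻¹ * x * y
/-- Conjugation `xʸ = y⁻¹ x y`. -/
def cj (x y : Perm V) : Perm V := y⁻¹ * x * y

/-- The normal closure in `G` of a subset `S` of `G`. -/
def ncl (S : Set (Perm V)) : Subgroup (Perm V) :=
  Subgroup.closure {x | ∃ s ∈ S, ∃ g ∈ G, x = g⁻¹ * s * g}

/-- `K = ⟨[a,b],[b,c],[b,d],[c,d], bcd⟩^G`. -/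
def K : Subgroup (Perm V) := ncl {pc a b, pc b c, pc b d, pc c d, b * c * d}

/-- The subgroup `[K, G]`. -/
def KG : Subgroup (Perm V) := ⁅K, G⁆

/-- The subgroup `C`, generated by `[K,G]` and `[a,b][b,c]`. -/
def Csub : Subgroup (Perm V) := KG ⊔ Subgroup.closure {pc a b * pc b c}

/-- `γ_n(G)`, the `n`-th term of the lower central series of `G` (starting at `γ₁ = G`),
viewed as a subgroup of `Perm V`. -/
def gammaG (n : ℕ) : Subgroup (Perm V) :=
  Subgroup.map G.subtype (Subgroup.lowerCentralSeries (⊤ : Subgroup ↥G) (n - 1))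


/-! ### Infrastructure -/

theorem Equiv.Perm.inv_apply_self (f : Perm V) (x : V) : f⁻¹ (f x) = x := Equiv.symm_apply_apply f x
theorem Equiv.Perm.apply_inv_self (f : Perm V) (x : V) : f (f⁻¹ x) = x := Equiv.apply_symm_apply f x

theorem aA (w : V) : actA (actA w) = w := actA_invol w
theorem bB (w : V) : actB (actB w) = w := actB_invol w
theorem cC (w : V) : actC (actC w) = w := actC_invol w
theorem dD (w : V) : actD (actD w) = w := actD_invol w

theorem a_mul_a : a * a = 1 := Equiv.ext fun w => actA_invol w
theorem b_mul_b : b * b = 1 := Equiv.ext fun w => actB_invol w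
theorem c_mul_c : c * c = 1 := Equiv.ext fun w => actC_invol w
theorem d_mul_d : d * d = 1 := Equiv.ext fun w => actD_invol w

theorem a_inv : a⁻¹ = a := inv_eq_of_mul_eq_one_right a_mul_a
theorem b_inv : b⁻¹ = b := inv_eq_of_mul_eq_one_right b_mul_b
theorem c_inv : c⁻¹ = c := inv_eq_of_mul_eq_one_right c_mul_c
theorem d_inv : d⁻¹ = d := inv_eq_of_mul_eq_one_right d_mul_d

/-! vstar basics -/

theorem vstar_apply (v : V) (g : Perm V) (w : V) : vstar v g w = vstarFun v (⇑g) w := rfl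

theorem vstar_one (v : V) : vstar v (1 : Perm V) = 1 := by
  refine Equiv.ext fun w => ?_
  show vstarFun v (⇑(1 : Perm V)) w = w
  rw [Equiv.Perm.coe_one]
  exact vstarFun_id v w

theorem vstar_mul (v : V) (g h : Perm V) : vstar v (g * h) = vstar v g * vstar v h := by
  refine Equiv.ext fun w => ?_
  show vstarFun v (⇑(g * h)) w = vstarFun v (⇑g) (vstarFun v (⇑h) w)
  rw [vstarFun_comp, Equiv.Perm.coe_mul]

theorem vstar_inv (v : V) (g : Perm V) : vstar v g⁻¹ = (vstar v g)⁻¹ := by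
  have h : vstar v g * vstar v g⁻¹ = 1 := by
    rw [← vstar_mul]
    simp [vstar_one]
  exact (inv_eq_of_mul_eq_one_right h).symm

theorem vstar_apply_append (v : V) (g : Perm V) (t : V) : vstar v g (v ++ t) = v ++ g t := by
  show vstarFun v (⇑g) (v ++ t) = v ++ g t
  rw [vstarFun, if_pos (List.prefix_append v t), List.drop_left]

theorem vstar_apply_of_not_prefix (v : V) (g : Perm V) (u : V) (h : ¬ v <+: u) :
    vstar v g u = u := by
  show vstarFun v (⇑g) u = u
  rw [vstarFun, if_neg h]
theorem vstar_single_cons_same (x : Bool) (g : Perm V) (t : V) :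
    vstar [x] g (x :: t) = x :: g t := vstar_apply_append [x] g t

theorem vstar_single_cons_other (x y : Bool) (g : Perm V) (t : V) (h : y ≠ x) :
    vstar [x] g (y :: t) = y :: t := by
  apply vstar_apply_of_not_prefix
  intro hp
  rcases hp with ⟨s, hs⟩
  simp at hs
  exact h hs.1.symm

theorem vstar_nil (v : V) (g : Perm V) (hv : v ≠ []) : vstar v g [] = [] := by
  apply vstar_apply_of_not_prefix
  intro hp
  exact hv (List.prefix_nil.mp hp)

theorem vstar_cons (x : Bool) (v : V) (g : Perm V) :
    vstar (x :: v) g = vstar [x] (vstar v g) := by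
  refine Equiv.ext fun u => ?_
  show vstarFun (x :: v) (⇑g) u = vstarFun [x] (⇑(vstar v g)) u
  match u with
  | [] =>
    rw [vstarFun, vstarFun, if_neg, if_neg]
    · intro hp; exact absurd (List.prefix_nil.mp hp) (by simp)
    · intro hp; exact absurd (List.prefix_nil.mp hp) (by simp)
  | y :: t =>
    by_cases hxy : x = y
    · subst hxy
      by_cases hv : v <+: t
      · rw [vstarFun, vstarFun, if_pos (List.cons_prefix_cons.mpr ⟨rfl, hv⟩),
          if_pos (List.cons_prefix_cons.mpr ⟨rfl, List.nil_prefix⟩)]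
        show x :: (v ++ g (List.drop (v.length) t)) = [x] ++ vstar v g t
        rw [List.singleton_append]
        congr 1
        show _ = vstarFun v (⇑g) t
        rw [vstarFun, if_pos hv]
      · rw [vstarFun, vstarFun, if_neg (fun hp => hv (List.cons_prefix_cons.mp hp).2),
          if_pos (List.cons_prefix_cons.mpr ⟨rfl, List.nil_prefix⟩)]
        show x :: t = [x] ++ vstar v g t
        rw [List.singleton_append]
        congr 1
        show _ = vstarFun v (⇑g) t
        rw [vstarFun, if_neg hv]
    · rw [vstarFun, vstarFun, if_neg (fun hp => hxy (List.cons_prefix_cons.mp hp).1),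
        if_neg (fun hp => hxy (List.cons_prefix_cons.mp hp).1)]

/-! Fix predicate: `Fx w v g` means `w` fixes the vertex `v` and acts as `g` on its subtree. -/

def Fx (w : Perm V) (v : V) (g : Perm V) : Prop := ∀ t : V, w (v ++ t) = v ++ g t

theorem fx_one (v : V) : Fx 1 v 1 := fun _ => rfl

theorem fx_nil (g : Perm V) : Fx g [] g := fun _ => rfl

theorem fx_mul {w₁ w₂ : Perm V} {v : V} {g₁ g₂ : Perm V} (h₁ : Fx w₁ v g₁) (h₂ : Fx w₂ v g₂) :
    Fx (w₁ * w₂) v (g₁ * g₂) := fun t => by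
  show w₁ (w₂ (v ++ t)) = v ++ g₁ (g₂ t)
  rw [h₂ t, h₁ (g₂ t)]

theorem fx_inv {w : Perm V} {v : V} {g : Perm V} (h : Fx w v g) : Fx w⁻¹ v g⁻¹ := fun t => by
  have := h (g⁻¹ t)
  rw [Equiv.Perm.apply_inv_self] at this
  rw [← this, Equiv.Perm.inv_apply_self]

theorem fx_cons {w : Perm V} {x : Bool} {h : Perm V} {v : V} {g : Perm V}
    (hw : Fx w [x] h) (hh : Fx h v g) : Fx w (x :: v) g := fun t => by
  show w ([x] ++ (v ++ t)) = [x] ++ (v ++ g t)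
  rw [hw (v ++ t), hh t]

theorem fx_conj {z : Perm V} {v : V} {g : Perm V} (hz : Fx z v g) (p : Perm V) :
    z⁻¹ * vstar v p * z = vstar v (g⁻¹ * p * g) := by
  refine Equiv.ext fun u => ?_
  show z⁻¹ (vstar v p (z u)) = vstar v (g⁻¹ * p * g) u
  by_cases hu : v <+: u
  · rcases hu with ⟨t, rfl⟩
    rw [hz t, vstar_apply_append, vstar_apply_append, fx_inv hz (p (g t))]
    rfl
  · have hz2 : ¬ v <+: z u := by
      intro hp
      rcases hp with ⟨s, hs⟩
      apply hu
      have : u = z⁻¹ (v ++ s) := by rw [hs, Equiv.Perm.inv_apply_self]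
      rw [this, fx_inv hz s]
      exact ⟨g⁻¹ s, rfl⟩
    rw [vstar_apply_of_not_prefix _ _ _ hz2, Equiv.Perm.inv_apply_self,
      vstar_apply_of_not_prefix _ _ _ hu]

theorem fx_conj_wrap {z w₀ : Perm V} {x : Bool} {h s : Perm V}
    (hz : Fx z [x] h) (hw : Fx w₀ [x] s) : Fx (z⁻¹ * w₀ * z) [x] (h⁻¹ * s * h) :=
  fx_mul (fx_mul (fx_inv hz) hw) hz
/-! conjugating a `vstar [true]` by `a` gives `vstar [false]`. -/
theorem vstar_false_eq_conj (g : Perm V) : vstar [false] g = a⁻¹ * vstar [true] g * a := by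
  rw [a_inv]
  refine Equiv.ext fun u => ?_
  show vstar [false] g u = a (vstar [true] g (a u))
  match u with
  | [] => rw [vstar_nil _ _ (by simp)]; rfl
  | false :: t =>
    show vstar [false] g (false :: t) = actA (vstar [true] g (actA (false :: t)))
    rw [vstar_single_cons_same]
    show _ = actA (vstar [true] g (true :: t))
    rw [vstar_single_cons_same]
    rfl
  | true :: t =>
    show vstar [false] g (true :: t) = actA (vstar [true] g (actA (true :: t)))
    rw [vstar_single_cons_other _ _ _ _ (by simp)]
    show _ = actA (vstar [true] g (false :: t))
    rw [vstar_single_cons_other _ _ _ _ (by simp)]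
    rfl

/-! ### Generic lemmas about normal closures -/

theorem mem_ncl_of_mem {S : Set (Perm V)} {s : Perm V} (hs : s ∈ S) : s ∈ ncl S := by
  apply Subgroup.subset_closure
  exact ⟨s, hs, 1, one_mem G, by simp⟩

theorem conj_mem_ncl {S : Set (Perm V)} {k : Perm V} (hk : k ∈ ncl S) {g : Perm V} (hg : g ∈ G) :
    g⁻¹ * k * g ∈ ncl S := by
  induction hk using Subgroup.closure_induction with
  | mem x hx =>
    rcases hx with ⟨s, hs, h, hh, rfl⟩
    apply Subgroup.subset_closure
    exact ⟨s, hs, h * g, mul_mem hh hg, by group⟩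
  | one => simpa using one_mem _
  | mul x y _ _ hx hy =>
    have : g⁻¹ * (x * y) * g = (g⁻¹ * x * g) * (g⁻¹ * y * g) := by group
    rw [this]; exact mul_mem hx hy
  | inv x _ hx =>
    have : g⁻¹ * x⁻¹ * g = (g⁻¹ * x * g)⁻¹ := by group
    rw [this]; exact inv_mem hx

/-! ### Recurrence for `G`: every element of `G` can be realized as the state of an
element of `G` at any vertex. -/

theorem grec1 : ∀ g ∈ G, ∀ x : Bool, ∃ w ∈ G, Fx w [x] g := by
  intro g hg
  induction hg using Subgroup.closure_induction with
  | mem y hy =>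
    intro x
    rcases hy with rfl | rfl | rfl | rfl
    · cases x
      · exact ⟨a * b * a, mul_mem (mul_mem a_mem_G b_mem_G) a_mem_G,
          fun t => by show (a*b*a) (false :: t) = false :: actA t; simp [Equiv.Perm.mul_apply, actA, actB]⟩
      · exact ⟨b, b_mem_G, fun t => by show actB (true :: t) = true :: actA t; simp [actB]⟩
    · cases x
      · exact ⟨a * d * a, mul_mem (mul_mem a_mem_G d_mem_G) a_mem_G,
          fun t => by show (a*d*a) (false :: t) = false :: actB t; simp [Equiv.Perm.mul_apply, actA, actD]⟩
      · exact ⟨d, d_mem_G, fun t => by show actD (true :: t) = true :: actB t; simp [actD]⟩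
    · cases x
      · exact ⟨b, b_mem_G, fun t => by show actB (false :: t) = false :: actC t; simp [actB]⟩
      · exact ⟨a * b * a, mul_mem (mul_mem a_mem_G b_mem_G) a_mem_G,
          fun t => by show (a*b*a) (true :: t) = true :: actC t; simp [Equiv.Perm.mul_apply, actA, actB]⟩
    · cases x
      · exact ⟨a * c * a, mul_mem (mul_mem a_mem_G c_mem_G) a_mem_G,
          fun t => by show (a*c*a) (false :: t) = false :: actD t; simp [Equiv.Perm.mul_apply, actA, actC]⟩
      · exact ⟨c, c_mem_G, fun t => by show actC (true :: t) = true :: actD t; simp [actC]⟩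
  | one => exact fun x => ⟨1, one_mem G, fx_one [x]⟩
  | mul u v _ _ hu hv =>
    intro x
    obtain ⟨w₁, hw₁, hf₁⟩ := hu x
    obtain ⟨w₂, hw₂, hf₂⟩ := hv x
    exact ⟨w₁ * w₂, mul_mem hw₁ hw₂, fx_mul hf₁ hf₂⟩
  | inv u _ hu =>
    intro x
    obtain ⟨w₁, hw₁, hf₁⟩ := hu x
    exact ⟨w₁⁻¹, inv_mem hw₁, fx_inv hf₁⟩

theorem grec : ∀ g ∈ G, ∀ v : V, ∃ w ∈ G, Fx w v g := by
  intro g hg v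
  induction v with
  | nil => exact ⟨g, hg, fx_nil g⟩
  | cons x v ih =>
    obtain ⟨h, hh, hf⟩ := ih
    obtain ⟨w, hw, hfw⟩ := grec1 h hh x
    exact ⟨w, hw, fx_cons hfw hf⟩
/-! ### The chain of subgroups used for realizing states inside `K` -/

def H1 : Subgroup (Perm V) := ncl {a * c, a * d * a * d, a * b * a * b}
def H2 : Subgroup (Perm V) := ncl {b, a * d, a * c}
def H3 : Subgroup (Perm V) := ncl {a, b, c, a * d}

theorem ncl_lift {S : Set (Perm V)} {T : Subgroup (Perm V)}
    (hT : ∀ k ∈ T, ∀ g ∈ G, g⁻¹ * k * g ∈ T)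
    (hbase : ∀ s ∈ S, ∀ x : Bool, ∃ w ∈ T, Fx w [x] s) :
    ∀ g' ∈ ncl S, ∀ x : Bool, ∃ w ∈ T, Fx w [x] g' := by
  intro g' hg'
  induction hg' using Subgroup.closure_induction with
  | mem y hy =>
    rcases hy with ⟨s, hs, h, hh, rfl⟩
    intro x
    obtain ⟨z, hz, hfz⟩ := grec1 h hh x
    obtain ⟨w₀, hw₀, hfw₀⟩ := hbase s hs x
    refine ⟨z⁻¹ * w₀ * z, ?_, fx_conj_wrap hfz hfw₀⟩
    have := hT w₀ hw₀ z hz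
    simpa [mul_assoc] using this
  | one => exact fun x => ⟨1, one_mem T, fx_one [x]⟩
  | mul u v _ _ hu hv =>
    intro x
    obtain ⟨w₁, hw₁, hf₁⟩ := hu x
    obtain ⟨w₂, hw₂, hf₂⟩ := hv x
    exact ⟨w₁ * w₂, mul_mem hw₁ hw₂, fx_mul hf₁ hf₂⟩
  | inv u _ hu =>
    intro x
    obtain ⟨w₁, hw₁, hf₁⟩ := hu x
    exact ⟨w₁⁻¹, inv_mem hw₁, fx_inv hf₁⟩
/-! Fix facts for the witnesses in the chain. -/

section FixFacts

theorem fxK_ac_f : Fx (pc a b) [false] (a * c) := by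
  intro t
  simp only [pc, a_inv, b_inv]
  show (a * b * a * b) (false :: t) = false :: (a * c) t
  simp [Equiv.Perm.mul_apply, actA, actB, actC]

theorem fxK_ac_t : Fx (a⁻¹ * pc a b * a) [true] (a * c) := by
  intro t
  simp only [pc, a_inv, b_inv]
  show (a * (a * b * a * b) * a) (true :: t) = true :: (a * c) t
  simp [Equiv.Perm.mul_apply, actA, actB, actC]

theorem fxK_adad_t : Fx (pc b c) [true] (a * d * a * d) := by
  intro t
  simp only [pc, b_inv, c_inv]
  show (b * c * b * c) (true :: t) = true :: (a * d * a * d) t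
  simp [Equiv.Perm.mul_apply, actA, actB, actC, actD]

theorem fxK_adad_f : Fx (a⁻¹ * pc b c * a) [false] (a * d * a * d) := by
  intro t
  simp only [pc, a_inv, b_inv, c_inv]
  show (a * (b * c * b * c) * a) (false :: t) = false :: (a * d * a * d) t
  simp [Equiv.Perm.mul_apply, actA, actB, actC, actD]

theorem fxK_abab_t : Fx (pc b d) [true] (a * b * a * b) := by
  intro t
  simp only [pc, b_inv, d_inv]
  show (b * d * b * d) (true :: t) = true :: (a * b * a * b) t
  simp [Equiv.Perm.mul_apply, actA, actB, actC, actD]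

theorem fxK_abab_f : Fx (a⁻¹ * pc b d * a) [false] (a * b * a * b) := by
  intro t
  simp only [pc, a_inv, b_inv, d_inv]
  show (a * (b * d * b * d) * a) (false :: t) = false :: (a * b * a * b) t
  simp [Equiv.Perm.mul_apply, actA, actB, actC, actD]

theorem fx_b_f_c : Fx b [false] c := by
  intro t; show actB (false :: t) = false :: actC t; simp [actB]

theorem fx_b_t_a : Fx b [true] a := by
  intro t; show actB (true :: t) = true :: actA t; simp [actB]

theorem fx_aba_f_a : Fx (a⁻¹ * b * a) [false] a := by
  intro t
  rw [a_inv]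
  show (a * b * a) (false :: t) = false :: actA t
  simp [Equiv.Perm.mul_apply, actA, actB]

theorem fx_aba_t_c : Fx (a⁻¹ * b * a) [true] c := by
  intro t
  rw [a_inv]
  show (a * b * a) (true :: t) = true :: actC t
  simp [Equiv.Perm.mul_apply, actA, actB]

theorem fx_c_t_d : Fx c [true] d := by
  intro t; show actC (true :: t) = true :: actD t; simp [actC]

theorem fx_aca_f_d : Fx (a⁻¹ * c * a) [false] d := by
  intro t
  rw [a_inv]
  show (a * c * a) (false :: t) = false :: actD t
  simp [Equiv.Perm.mul_apply, actA, actC]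

theorem fx_adad_b (x : Bool) : Fx ((a * d) * (a * d)) [x] b := by
  intro t
  cases x
  · show ((a*d)*(a*d)) (false :: t) = false :: actB t
    simp [Equiv.Perm.mul_apply, actA, actD]
  · show ((a*d)*(a*d)) (true :: t) = true :: actB t
    simp [Equiv.Perm.mul_apply, actA, actD]

theorem fx_caca_f_ad : Fx ((a * c)⁻¹ * (a * c)⁻¹) [false] (a * d) := by
  intro t
  simp only [mul_inv_rev, a_inv, c_inv]
  show ((c * a) * (c * a)) (false :: t) = false :: (a * d) t
  simp [Equiv.Perm.mul_apply, actA, actC, actD]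

theorem fx_acac_t_ad : Fx ((a * c) * (a * c)) [true] (a * d) := by
  intro t
  show ((a * c) * (a * c)) (true :: t) = true :: (a * d) t
  simp [Equiv.Perm.mul_apply, actA, actC, actD]

theorem fx_abab_f_ac : Fx (a * b * a * b) [false] (a * c) := by
  intro t
  show (a * b * a * b) (false :: t) = false :: (a * c) t
  simp [Equiv.Perm.mul_apply, actA, actB, actC]

theorem fx_baba_t_ac : Fx (a⁻¹ * (a * b * a * b) * a) [true] (a * c) := by
  intro t
  rw [a_inv]
  show (a * (a * b * a * b) * a) (true :: t) = true :: (a * c) t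
  simp [Equiv.Perm.mul_apply, actA, actB, actC]

end FixFacts

/-! ### The chain lemmas -/

theorem claimA : ∀ g ∈ G, ∀ x : Bool, ∃ w ∈ H3, Fx w [x] g := by
  intro g hg
  induction hg using Subgroup.closure_induction with
  | mem y hy =>
    intro x
    have hb : b ∈ H3 := mem_ncl_of_mem (by simp)
    have hc : c ∈ H3 := mem_ncl_of_mem (by simp)
    have had : a * d ∈ H3 := mem_ncl_of_mem (by simp)
    rcases hy with rfl | rfl | rfl | rfl
    · cases x
      · exact ⟨a⁻¹ * b * a, conj_mem_ncl hb a_mem_G, fx_aba_f_a⟩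
      · exact ⟨b, hb, fx_b_t_a⟩
    · exact ⟨(a * d) * (a * d), mul_mem had had, fx_adad_b x⟩
    · cases x
      · exact ⟨b, hb, fx_b_f_c⟩
      · exact ⟨a⁻¹ * b * a, conj_mem_ncl hb a_mem_G, fx_aba_t_c⟩
    · cases x
      · exact ⟨a⁻¹ * c * a, conj_mem_ncl hc a_mem_G, fx_aca_f_d⟩
      · exact ⟨c, hc, fx_c_t_d⟩
  | one => exact fun x => ⟨1, one_mem H3, fx_one [x]⟩
  | mul u v _ _ hu hv =>
    intro x
    obtain ⟨w₁, hw₁, hf₁⟩ := hu x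
    obtain ⟨w₂, hw₂, hf₂⟩ := hv x
    exact ⟨w₁ * w₂, mul_mem hw₁ hw₂, fx_mul hf₁ hf₂⟩
  | inv u _ hu =>
    intro x
    obtain ⟨w₁, hw₁, hf₁⟩ := hu x
    exact ⟨w₁⁻¹, inv_mem hw₁, fx_inv hf₁⟩

theorem claimB : ∀ g ∈ H3, ∀ x : Bool, ∃ w ∈ H2, Fx w [x] g := by
  apply ncl_lift (fun k hk g hg => conj_mem_ncl hk hg)
  intro s hs x
  have hb : b ∈ H2 := mem_ncl_of_mem (by simp)
  have had : a * d ∈ H2 := mem_ncl_of_mem (by simp)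
  have hac : a * c ∈ H2 := mem_ncl_of_mem (by simp)
  rcases hs with rfl | rfl | rfl | rfl
  · cases x
    · exact ⟨a⁻¹ * b * a, conj_mem_ncl hb a_mem_G, fx_aba_f_a⟩
    · exact ⟨b, hb, fx_b_t_a⟩
  · exact ⟨(a * d) * (a * d), mul_mem had had, fx_adad_b x⟩
  · cases x
    · exact ⟨b, hb, fx_b_f_c⟩
    · exact ⟨a⁻¹ * b * a, conj_mem_ncl hb a_mem_G, fx_aba_t_c⟩
  · cases x
    · exact ⟨(a * c)⁻¹ * (a * c)⁻¹, mul_mem (inv_mem hac) (inv_mem hac), fx_caca_f_ad⟩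
    · exact ⟨(a * c) * (a * c), mul_mem hac hac, fx_acac_t_ad⟩

theorem claimC : ∀ g ∈ H2, ∀ x : Bool, ∃ w ∈ H1, Fx w [x] g := by
  apply ncl_lift (fun k hk g hg => conj_mem_ncl hk hg)
  intro s hs x
  have hac : a * c ∈ H1 := mem_ncl_of_mem (by simp)
  have hadad : a * d * a * d ∈ H1 := mem_ncl_of_mem (by simp)
  have habab : a * b * a * b ∈ H1 := mem_ncl_of_mem (by simp)
  rcases hs with rfl | rfl | rfl
  · have : (a * d) * (a * d) = a * d * a * d := by group
    exact ⟨a * d * a * d, hadad, this ▸ fx_adad_b x⟩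
  · cases x
    · exact ⟨(a * c)⁻¹ * (a * c)⁻¹, mul_mem (inv_mem hac) (inv_mem hac), fx_caca_f_ad⟩
    · exact ⟨(a * c) * (a * c), mul_mem hac hac, fx_acac_t_ad⟩
  · cases x
    · exact ⟨a * b * a * b, habab, fx_abab_f_ac⟩
    · exact ⟨a⁻¹ * (a * b * a * b) * a, conj_mem_ncl habab a_mem_G, fx_baba_t_ac⟩

theorem claimD : ∀ g ∈ H1, ∀ x : Bool, ∃ w ∈ K, Fx w [x] g := by
  apply ncl_lift (fun k hk g hg => conj_mem_ncl hk hg)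
  intro s hs x
  have h1 : pc a b ∈ K := mem_ncl_of_mem (by simp)
  have h2 : pc b c ∈ K := mem_ncl_of_mem (by simp)
  have h3 : pc b d ∈ K := mem_ncl_of_mem (by simp)
  rcases hs with rfl | rfl | rfl
  · cases x
    · exact ⟨pc a b, h1, fxK_ac_f⟩
    · exact ⟨a⁻¹ * pc a b * a, conj_mem_ncl h1 a_mem_G, fxK_ac_t⟩
  · cases x
    · exact ⟨a⁻¹ * pc b c * a, conj_mem_ncl h2 a_mem_G, fxK_adad_f⟩
    · exact ⟨pc b c, h2, fxK_adad_t⟩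
  · cases x
    · exact ⟨a⁻¹ * pc b d * a, conj_mem_ncl h3 a_mem_G, fxK_abab_f⟩
    · exact ⟨pc b d, h3, fxK_abab_t⟩

/-- Realization of arbitrary elements of `G` as states of elements of `K`,
at any vertex of level at least 4. -/
theorem lemB : ∀ v : V, 4 ≤ v.length → ∀ g ∈ G, ∃ w ∈ K, Fx w v g := by
  intro v hv g hg
  match v, hv with
  | x1 :: x2 :: x3 :: x4 :: rest, _ =>
    obtain ⟨h4, hh4, hf4⟩ := grec g hg rest
    obtain ⟨h3, hh3, hf3⟩ := claimA h4 hh4 x4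
    obtain ⟨h2, hh2, hf2⟩ := claimB h3 hh3 x3
    obtain ⟨h1, hh1, hf1⟩ := claimC h2 hh2 x2
    obtain ⟨w, hw, hf⟩ := claimD h1 hh1 x1
    exact ⟨w, hw, fx_cons hf (fx_cons hf1 (fx_cons hf2 (fx_cons hf3 hf4)))⟩
/-! ### evaluation lemmas for the generators -/

theorem actA_nil : actA [] = [] := rfl
theorem actA_f (w : V) : actA (false :: w) = true :: w := rfl
theorem actA_t (w : V) : actA (true :: w) = false :: w := rfl
theorem actB_nil : actB [] = [] := by rw [actB]
theorem actB_f (w : V) : actB (false :: w) = false :: actC w := by rw [actB]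
theorem actB_t (w : V) : actB (true :: w) = true :: actA w := by rw [actB]
theorem actC_nil : actC [] = [] := by rw [actC]
theorem actC_f (w : V) : actC (false :: w) = false :: actA w := by rw [actC]
theorem actC_t (w : V) : actC (true :: w) = true :: actD w := by rw [actC]
theorem actD_nil : actD [] = [] := by rw [actD]
theorem actD_f (w : V) : actD (false :: w) = false :: w := by rw [actD]
theorem actD_t (w : V) : actD (true :: w) = true :: actB w := by rw [actD]

theorem a_app (w : V) : a w = actA w := rfl
theorem b_app (w : V) : b w = actB w := rfl
theorem c_app (w : V) : c w = actC w := rfl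
theorem d_app (w : V) : d w = actD w := rfl

/-! ### ψ-identities for the generators of K -/

theorem tA1 : vstar [true] (pc a b) = pc b d := by
  have hL : pc a b = a * b * a * b := by rw [pc, a_inv, b_inv]
  have hR : pc b d = b * d * b * d := by rw [pc, b_inv, d_inv]
  rw [hL, hR]
  refine Equiv.ext fun u => ?_
  match u with
  | [] =>
    rw [vstar_nil _ _ (by simp)]
    show _ = (b * d * b * d) []
    simp only [Equiv.Perm.mul_apply, a_app, b_app, c_app, d_app, actA_nil, actA_f, actA_t, actB_nil, actB_f, actB_t, actC_nil, actC_f, actC_t, actD_nil, actD_f, actD_t, aA, bB, cC, dD]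
  | false :: t =>
    rw [vstar_single_cons_other _ _ _ _ (by simp)]
    show _ = (b * d * b * d) (false :: t)
    simp only [Equiv.Perm.mul_apply, a_app, b_app, c_app, d_app, actA_nil, actA_f, actA_t, actB_nil, actB_f, actB_t, actC_nil, actC_f, actC_t, actD_nil, actD_f, actD_t, aA, bB, cC, dD]
  | true :: t =>
    rw [vstar_single_cons_same]
    show true :: (a * b * a * b) t = (b * d * b * d) (true :: t)
    simp only [Equiv.Perm.mul_apply, a_app, b_app, c_app, d_app, actA_nil, actA_f, actA_t, actB_nil, actB_f, actB_t, actC_nil, actC_f, actC_t, actD_nil, actD_f, actD_t, aA, bB, cC, dD]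

theorem tA3 : vstar [true] (pc b d) = (pc c d)⁻¹ := by
  have hL : pc b d = b * d * b * d := by rw [pc, b_inv, d_inv]
  have hR : (pc c d)⁻¹ = d * c * d * c := by
    rw [pc]; simp [mul_inv_rev, c_inv, d_inv, mul_assoc]
  rw [hL, hR]
  refine Equiv.ext fun u => ?_
  match u with
  | [] =>
    rw [vstar_nil _ _ (by simp)]
    show _ = (d * c * d * c) []
    simp only [Equiv.Perm.mul_apply, a_app, b_app, c_app, d_app, actA_nil, actA_f, actA_t, actB_nil, actB_f, actB_t, actC_nil, actC_f, actC_t, actD_nil, actD_f, actD_t, aA, bB, cC, dD]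
  | false :: t =>
    rw [vstar_single_cons_other _ _ _ _ (by simp)]
    show _ = (d * c * d * c) (false :: t)
    simp only [Equiv.Perm.mul_apply, a_app, b_app, c_app, d_app, actA_nil, actA_f, actA_t, actB_nil, actB_f, actB_t, actC_nil, actC_f, actC_t, actD_nil, actD_f, actD_t, aA, bB, cC, dD]
  | true :: t =>
    rw [vstar_single_cons_same]
    show true :: (b * d * b * d) t = (d * c * d * c) (true :: t)
    simp only [Equiv.Perm.mul_apply, a_app, b_app, c_app, d_app, actA_nil, actA_f, actA_t, actB_nil, actB_f, actB_t, actC_nil, actC_f, actC_t, actD_nil, actD_f, actD_t, aA, bB, cC, dD]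
theorem wid4 (t : V) :
    actC (actA (actD (actA (actD (actC (actD (actC (actA (actD (actA (actC t))))))))))) =
      actC (actD (actC (actD t))) := by
  match t with
  | [] => simp only [Equiv.Perm.mul_apply, a_app, b_app, c_app, d_app, actA_nil, actA_f, actA_t, actB_nil, actB_f, actB_t, actC_nil, actC_f, actC_t, actD_nil, actD_f, actD_t, aA, bB, cC, dD]
  | false :: w => simp only [Equiv.Perm.mul_apply, a_app, b_app, c_app, d_app, actA_nil, actA_f, actA_t, actB_nil, actB_f, actB_t, actC_nil, actC_f, actC_t, actD_nil, actD_f, actD_t, aA, bB, cC, dD]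
  | true :: w => simp only [Equiv.Perm.mul_apply, a_app, b_app, c_app, d_app, actA_nil, actA_f, actA_t, actB_nil, actB_f, actB_t, actC_nil, actC_f, actC_t, actD_nil, actD_f, actD_t, aA, bB, cC, dD]

theorem tA2 : vstar [true] (pc b c) = (d⁻¹ * pc a b * d) * (pc b d)⁻¹ * (pc a b)⁻¹ := by
  have hL : pc b c = b * c * b * c := by rw [pc, b_inv, c_inv]
  have hR : (d⁻¹ * pc a b * d) * (pc b d)⁻¹ * (pc a b)⁻¹ =
      d * (a * (b * (a * (b * (d * (d * (b * (d * (b * (b * (a * (b * a)))))))))))) := by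
    rw [pc, pc]
    simp [mul_inv_rev, a_inv, b_inv, c_inv, d_inv, mul_assoc]
  rw [hL, hR]
  refine Equiv.ext fun u => ?_
  match u with
  | [] =>
    rw [vstar_nil _ _ (by simp)]
    show _ = _
    simp only [Equiv.Perm.mul_apply, a_app, b_app, c_app, d_app, actA_nil, actA_f, actA_t, actB_nil, actB_f, actB_t, actC_nil, actC_f, actC_t, actD_nil, actD_f, actD_t, aA, bB, cC, dD]
  | false :: t =>
    rw [vstar_single_cons_other _ _ _ _ (by simp)]
    show false :: t = _
    simp only [Equiv.Perm.mul_apply, a_app, b_app, c_app, d_app, actA_nil, actA_f, actA_t, actB_nil, actB_f, actB_t, actC_nil, actC_f, actC_t, actD_nil, actD_f, actD_t, aA, bB, cC, dD]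
  | true :: t =>
    rw [vstar_single_cons_same]
    show true :: (b * c * b * c) t = _
    simp only [Equiv.Perm.mul_apply, a_app, b_app, c_app, d_app, actA_nil, actA_f, actA_t, actB_nil, actB_f, actB_t, actC_nil, actC_f, actC_t, actD_nil, actD_f, actD_t, aA, bB, cC, dD]

theorem tA4 : vstar [true] (pc c d) =
    ((a * b * a)⁻¹ * pc b c * (a * b * a)) * (c⁻¹ * pc a b * c) * (pc a b)⁻¹ := by
  have hL : pc c d = c * d * c * d := by rw [pc, c_inv, d_inv]
  have hR : ((a * b * a)⁻¹ * pc b c * (a * b * a)) * (c⁻¹ * pc a b * c) * (pc a b)⁻¹ =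
      a * (b * (a * (b * (c * (b * (c * (a * (b * (a * (c * (a * (b * (a * (b * (c * (b * (a * (b * a)))))))))))))))))) := by
    rw [pc, pc]
    simp [mul_inv_rev, a_inv, b_inv, c_inv, d_inv, mul_assoc]
  rw [hL, hR]
  refine Equiv.ext fun u => ?_
  match u with
  | [] =>
    rw [vstar_nil _ _ (by simp)]
    show _ = _
    simp only [Equiv.Perm.mul_apply, a_app, b_app, c_app, d_app, actA_nil, actA_f, actA_t, actB_nil, actB_f, actB_t, actC_nil, actC_f, actC_t, actD_nil, actD_f, actD_t, aA, bB, cC, dD]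
  | false :: t =>
    rw [vstar_single_cons_other _ _ _ _ (by simp)]
    show false :: t = _
    simp only [Equiv.Perm.mul_apply, a_app, b_app, c_app, d_app, actA_nil, actA_f, actA_t, actB_nil, actB_f, actB_t, actC_nil, actC_f, actC_t, actD_nil, actD_f, actD_t, aA, bB, cC, dD]
  | true :: t =>
    rw [vstar_single_cons_same]
    show true :: (c * d * c * d) t = _
    simp only [Equiv.Perm.mul_apply, a_app, b_app, c_app, d_app, actA_nil, actA_f, actA_t, actB_nil, actB_f, actB_t, actC_nil, actC_f, actC_t, actD_nil, actD_f, actD_t, aA, bB, cC, dD, wid4]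

theorem tA5 : vstar [true] (b * c * d) = (d⁻¹ * pc a b * d) * (d⁻¹ * (b * c * d) * d) := by
  have hR : (d⁻¹ * pc a b * d) * (d⁻¹ * (b * c * d) * d) =
      d * (a * (b * (a * (b * (d * (d * (b * (c * (d * d))))))))) := by
    rw [pc]
    simp [mul_inv_rev, a_inv, b_inv, c_inv, d_inv, mul_assoc]
  rw [hR]
  refine Equiv.ext fun u => ?_
  match u with
  | [] =>
    rw [vstar_nil _ _ (by simp)]
    show _ = _
    simp only [Equiv.Perm.mul_apply, a_app, b_app, c_app, d_app, actA_nil, actA_f, actA_t, actB_nil, actB_f, actB_t, actC_nil, actC_f, actC_t, actD_nil, actD_f, actD_t, aA, bB, cC, dD]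
  | false :: t =>
    rw [vstar_single_cons_other _ _ _ _ (by simp)]
    show false :: t = _
    simp only [Equiv.Perm.mul_apply, a_app, b_app, c_app, d_app, actA_nil, actA_f, actA_t, actB_nil, actB_f, actB_t, actC_nil, actC_f, actC_t, actD_nil, actD_f, actD_t, aA, bB, cC, dD]
  | true :: t =>
    rw [vstar_single_cons_same]
    show true :: (b * c * d) t = _
    simp only [Equiv.Perm.mul_apply, a_app, b_app, c_app, d_app, actA_nil, actA_f, actA_t, actB_nil, actB_f, actB_t, actC_nil, actC_f, actC_t, actD_nil, actD_f, actD_t, aA, bB, cC, dD]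
/-! ### `X * K ⊆ K` and the main theorem -/

theorem r1_mem : pc a b ∈ K := mem_ncl_of_mem (by simp)
theorem r2_mem : pc b c ∈ K := mem_ncl_of_mem (by simp)
theorem r3_mem : pc b d ∈ K := mem_ncl_of_mem (by simp)
theorem r4_mem : pc c d ∈ K := mem_ncl_of_mem (by simp)
theorem r5_mem : b * c * d ∈ K := mem_ncl_of_mem (by simp)

theorem vstar_true_gen_mem :
    ∀ s ∈ ({pc a b, pc b c, pc b d, pc c d, b * c * d} : Set (Perm V)),
      vstar [true] s ∈ K := by
  intro s hs
  rcases hs with rfl | rfl | rfl | rfl | rfl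
  · rw [tA1]; exact r3_mem
  · rw [tA2]
    exact mul_mem (mul_mem (conj_mem_ncl r1_mem d_mem_G) (inv_mem r3_mem)) (inv_mem r1_mem)
  · rw [tA3]; exact inv_mem r4_mem
  · rw [tA4]
    exact mul_mem (mul_mem (conj_mem_ncl r2_mem (mul_mem (mul_mem a_mem_G b_mem_G) a_mem_G))
      (conj_mem_ncl r1_mem c_mem_G)) (inv_mem r1_mem)
  · rw [tA5]
    exact mul_mem (conj_mem_ncl r1_mem d_mem_G) (conj_mem_ncl r5_mem d_mem_G)

theorem vstar_gen_mem :
    ∀ s ∈ ({pc a b, pc b c, pc b d, pc c d, b * c * d} : Set (Perm V)),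
      ∀ x : Bool, vstar [x] s ∈ K := by
  intro s hs x
  cases x
  · rw [vstar_false_eq_conj]
    exact conj_mem_ncl (vstar_true_gen_mem s hs) a_mem_G
  · exact vstar_true_gen_mem s hs

theorem vstar_single_mem_K : ∀ k ∈ K, ∀ x : Bool, vstar [x] k ∈ K := by
  intro k hk
  induction hk using Subgroup.closure_induction with
  | mem y hy =>
    rcases hy with ⟨s, hs, h, hh, rfl⟩
    intro x
    obtain ⟨z, hz, hfz⟩ := grec1 h hh x
    rw [← fx_conj hfz s]
    have : z⁻¹ * vstar [x] s * z ∈ K := conj_mem_ncl (vstar_gen_mem s hs x) hz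
    simpa [mul_assoc] using this
  | one => intro x; rw [vstar_one]; exact one_mem K
  | mul u v _ _ hu hv => intro x; rw [vstar_mul]; exact mul_mem (hu x) (hv x)
  | inv u _ hu => intro x; rw [vstar_inv]; exact inv_mem (hu x)

theorem vstar_mem_K : ∀ (v : V), v ≠ [] → ∀ k ∈ K, vstar v k ∈ K := by
  intro v
  induction v with
  | nil => intro h; exact absurd rfl h
  | cons x v ih =>
    intro _ k hk
    cases v with
    | nil => exact vstar_single_mem_K k hk x
    | cons y w =>
      rw [vstar_cons]
      exact vstar_single_mem_K _ (ih (by simp) k hk) x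

open scoped commutatorElement in
theorem mainLem : ∀ (v : V), 4 ≤ v.length → ∀ h ∈ KG, vstar v h ∈ ⁅K, K⁆ := by
  intro v hv h hh
  rw [KG, Subgroup.commutator_def] at hh
  induction hh using Subgroup.closure_induction with
  | mem y hy =>
    rcases hy with ⟨k, hk, g, hgG, rfl⟩
    obtain ⟨w, hw, hfw⟩ := lemB v hv g⁻¹ (inv_mem hgG)
    have hconj := fx_conj hfw k⁻¹
    rw [inv_inv] at hconj
    have hsplit : (⁅k, g⁆ : Perm V) = k * (g * k⁻¹ * g⁻¹) := by
      rw [commutatorElement_def]; group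
    have : vstar v ⁅k, g⁆ = ⁅vstar v k, w⁻¹⁆ := by
      rw [hsplit, vstar_mul, ← hconj, vstar_inv, commutatorElement_def, inv_inv]
      group
    rw [this]
    exact Subgroup.commutator_mem_commutator (vstar_mem_K v (by
      intro hnil; rw [hnil] at hv; simp at hv) k hk) (inv_mem hw)
  | one => rw [vstar_one]; exact one_mem _
  | mul u u' _ _ hu hu' => rw [vstar_mul]; exact mul_mem hu hu'
  | inv u _ hu => rw [vstar_inv]; exact inv_mem hu

/-- **Lemma.** `K' = [K,K]` contains `Xⁿ*[K,G]` for all `n ≥ 5`. -/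
theorem stmt11 : ∀ n : ℕ, 5 ≤ n → XstarSub n KG ≤ ⁅K, K⁆ := by
  intro n hn
  rw [XstarSub]
  apply (Subgroup.closure_le _).mpr
  rintro p ⟨v, g, hlen, hg, rfl⟩
  exact mainLem v (by omega) g hg
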